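/- For every vertex v of the d-dimensional hypercube Q^d, the simple configuration that places 3^d − 1 pebbles on v and no pebbles elsewhere is not coverable. -/

import Mathlib

open Finset

/-- A pebbling step on graph `G`: remove two pebbles from a vertex `u`,
place one pebble on an adjacent vertex `v`. -/
def PebbleStep {V : Type*} (G : SimpleGraph V) (C C' : V → ℕ) : Prop :=
  ∃ u v : V, G.Adj u v ∧ 2 ≤ C u ∧ C' u = C u - 2 ∧ C' v = C v + 1 ∧
    ∀ x : V, x ≠ u → x ≠ v → C' x = C x

/-- A configuration is coverable if after some sequence of pebbling steps
every vertex has at least one pebble. -/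
def Coverable {V : Type*} (G : SimpleGraph V) (C : V → ℕ) : Prop :=
  ∃ C' : V → ℕ, Relation.ReflTransGen (PebbleStep G) C C' ∧ ∀ v : V, 1 ≤ C' v

/-- The `d`-dimensional hypercube: vertices are binary `d`-tuples, adjacent
exactly when they differ in one coordinate. -/
def cube (d : ℕ) : SimpleGraph (Fin d → Bool) where
  Adj x y := hammingDist x y = 1
  symm := ⟨fun x y (h : hammingDist x y = 1) => (hammingDist_comm y x).trans h⟩
  loopless := ⟨fun x (h : hammingDist x x = 1) => by simp [hammingDist_self] at h⟩

/-- Weight of a configuration relative to `v`. -/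
def wt (d : ℕ) (v : Fin d → Bool) (C : (Fin d → Bool) → ℕ) : ℕ :=
  ∑ x : Fin d → Bool, C x * 2 ^ hammingDist x v

lemma wt_step {d : ℕ} {v : Fin d → Bool} {C C' : (Fin d → Bool) → ℕ}
    (h : PebbleStep (cube d) C C') : wt d v C' ≤ wt d v C := by
  obtain ⟨u, w, hadj, h2, hu, hw, hother⟩ := h
  have hne : u ≠ w := (cube d).ne_of_adj hadj
  have key : wt d v C' + 2 * 2 ^ hammingDist u v
      = wt d v C + 2 ^ hammingDist w v := by
    have : ∀ x : Fin d → Bool,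
        C' x * 2 ^ hammingDist x v + (if x = u then 2 * 2 ^ hammingDist u v else 0)
        = C x * 2 ^ hammingDist x v + (if x = w then 2 ^ hammingDist w v else 0) := by
      intro x
      by_cases hxu : x = u
      · subst hxu
        simp only [if_pos rfl, if_neg hne, hu, add_zero, if_true]
        rw [← Nat.add_mul, Nat.sub_add_cancel h2]
      · by_cases hxw : x = w
        · subst hxw
          simp only [if_neg hxu, if_pos rfl, hw, add_zero, add_mul, one_mul, if_true]
        · simp [hxu, hxw, hother x hxu hxw]
    calc wt d v C' + 2 * 2 ^ hammingDist u v
        = ∑ x : Fin d → Bool, (C' x * 2 ^ hammingDist x v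
            + (if x = u then 2 * 2 ^ hammingDist u v else 0)) := by
          rw [Finset.sum_add_distrib, Finset.sum_ite_eq' Finset.univ u,
            if_pos (Finset.mem_univ u)]; rfl
      _ = ∑ x : Fin d → Bool, (C x * 2 ^ hammingDist x v
            + (if x = w then 2 ^ hammingDist w v else 0)) :=
          Finset.sum_congr rfl fun x _ => this x
      _ = wt d v C + 2 ^ hammingDist w v := by
          rw [Finset.sum_add_distrib, Finset.sum_ite_eq' Finset.univ w,
            if_pos (Finset.mem_univ w)]; rfl
  have hle : 2 ^ hammingDist w v ≤ 2 * 2 ^ hammingDist u v := by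
    have : hammingDist w v ≤ 1 + hammingDist u v := by
      have := hammingDist_triangle w u v
      rwa [hammingDist_comm w u, (show hammingDist u w = 1 from hadj)] at this
    calc 2 ^ hammingDist w v ≤ 2 ^ (1 + hammingDist u v) :=
          Nat.pow_le_pow_right (by norm_num) this
      _ = 2 * 2 ^ hammingDist u v := by rw [pow_add, pow_one]
  omega

lemma wt_sum (d : ℕ) (v : Fin d → Bool) :
    ∑ x : Fin d → Bool, 2 ^ hammingDist x v = 3 ^ d := by
  have h1 : ∀ x : Fin d → Bool,
      (2 : ℕ) ^ hammingDist x v = ∏ i : Fin d, (if x i = v i then 1 else 2) := by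
    intro x
    rw [hammingDist, Finset.prod_ite, Finset.prod_const, Finset.prod_const,
      one_pow, one_mul]
  calc ∑ x : Fin d → Bool, 2 ^ hammingDist x v
      = ∑ x : Fin d → Bool, ∏ i : Fin d, (if x i = v i then 1 else 2) :=
        Finset.sum_congr rfl fun x _ => h1 x
    _ = ∏ i : Fin d, ∑ b : Bool, (if b = v i then 1 else 2) :=
        (Fintype.prod_sum fun i b => if b = v i then 1 else 2).symm
    _ = 3 ^ d := by
        rw [Finset.prod_congr rfl fun i _ => ?_, Finset.prod_const, Finset.card_univ,
          Fintype.card_fin]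
        cases h : v i <;> simp [Fintype.sum_bool, h]


/-- For every vertex `v` of `Q^d`, the simple configuration placing `3^d − 1`
pebbles on `v` and none elsewhere is not coverable. -/
theorem simple_configuration_not_coverable (d : ℕ) (v : Fin d → Bool) :
    ¬ Coverable (cube d) (fun x => if x = v then 3 ^ d - 1 else 0) := by
  rintro ⟨C', hsteps, hcov⟩
  have hmono : wt d v C' ≤ wt d v (fun x => if x = v then 3 ^ d - 1 else 0) := by
    clear hcov
    induction hsteps with
    | refl => exact le_refl _
    | tail _ step ih => exact le_trans (wt_step step) ih
  have hinit : wt d v (fun x => if x = v then 3 ^ d - 1 else 0) = 3 ^ d - 1 := by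
    unfold wt
    rw [Finset.sum_eq_single v]
    · simp
    · intro x _ hx; simp [hx]
    · simp
  have hfin : 3 ^ d ≤ wt d v C' := by
    rw [← wt_sum d v]
    exact Finset.sum_le_sum fun x _ => le_mul_of_one_le_left (Nat.zero_le _) (hcov x)
  have h3 : 1 ≤ 3 ^ d := Nat.one_le_pow _ _ (by norm_num)
  omega
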